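/- Let X be a topological group that is a cosmic space (regular with a countable network) and has a countable Pytkeev network at its identity element. Then X has a countable Pytkeev network. -/

import Mathlib

open Set Filter Topology TopologicalSpace
open scoped Pointwise

/-- A set `A` accumulates at `x` if every neighborhood of `x` contains
infinitely many points of `A`. -/
def AccumulatesAt {X : Type*} [TopologicalSpace X] (A : Set X) (x : X) : Prop :=
  ∀ U ∈ 𝓝 x, (U ∩ A).Infinite

/-- `𝒩` is a network: for each point and open neighborhood there is a member of `𝒩`
containing the point and contained in the neighborhood. -/
def IsNetwork {X : Type*} [TopologicalSpace X] (𝒩 : Set (Set X)) : Prop :=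
  ∀ (x : X) (U : Set X), IsOpen U → x ∈ U → ∃ N ∈ 𝒩, x ∈ N ∧ N ⊆ U

/-- `𝒩` is a Pytkeev network. -/
def IsPytkeevNetwork {X : Type*} [TopologicalSpace X] (𝒩 : Set (Set X)) : Prop :=
  IsNetwork 𝒩 ∧ ∀ (x : X) (U : Set X), IsOpen U → x ∈ U →
    ∀ A : Set X, AccumulatesAt A x → ∃ N ∈ 𝒩, N ⊆ U ∧ (N ∩ A).Infinite

/-- `𝒩` is a k-network. -/
def IsKNetwork {X : Type*} [TopologicalSpace X] (𝒩 : Set (Set X)) : Prop :=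
  ∀ (U K : Set X), IsOpen U → IsCompact K → K ⊆ U →
    ∃ F ⊆ 𝒩, F.Finite ∧ K ⊆ ⋃₀ F ∧ ⋃₀ F ⊆ U

/-- `𝒩` is a network at the point `x`. -/
def IsNetworkAt {X : Type*} [TopologicalSpace X] (𝒩 : Set (Set X)) (x : X) : Prop :=
  ∀ U : Set X, IsOpen U → x ∈ U → ∃ N ∈ 𝒩, x ∈ N ∧ N ⊆ U

/-- `𝒩` is a Pytkeev network at the point `x`. -/
def IsPytkeevNetworkAt {X : Type*} [TopologicalSpace X] (𝒩 : Set (Set X)) (x : X) : Prop :=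
  IsNetworkAt 𝒩 x ∧ ∀ U : Set X, IsOpen U → x ∈ U →
    ∀ A : Set X, AccumulatesAt A x → ∃ N ∈ 𝒩, N ⊆ U ∧ (N ∩ A).Infinite

/-- A cosmic topological group with a countable Pytkeev network at the identity
has a countable Pytkeev network. -/
theorem cosmicGroup_countable_pytkeevNetwork {G : Type*} [Group G] [TopologicalSpace G]
    [IsTopologicalGroup G] [T3Space G]
    (hnet : ∃ 𝒩 : Set (Set G), 𝒩.Countable ∧ IsNetwork 𝒩)
    (hpyt : ∃ Pnet : Set (Set G), Pnet.Countable ∧ IsPytkeevNetworkAt Pnet (1 : G)) :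
    ∃ 𝒩 : Set (Set G), 𝒩.Countable ∧ IsPytkeevNetwork 𝒩 := by
  obtain ⟨𝒩, h𝒩c, h𝒩⟩ := hnet
  obtain ⟨P, hPc, hPnet, hPpyt⟩ := hpyt
  refine ⟨Set.image2 (· * ·) 𝒩 P, h𝒩c.image2 hPc _, ?_, ?_⟩
  · -- network
    intro x U hU hxU
    obtain ⟨V, hVo, hV1, hVV⟩ := exists_open_nhds_one_mul_subset
      ((hU.preimage (continuous_mul_left x)).mem_nhds (by simpa using hxU))
    obtain ⟨N, hN, h1N, hNV⟩ := hPnet V hVo hV1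
    obtain ⟨D, hD, hxD, hDsub⟩ := h𝒩 x (x • V) (hVo.smul x) ⟨1, hV1, mul_one x⟩
    refine ⟨D * N, Set.mem_image2_of_mem hD hN, ⟨x, hxD, 1, h1N, mul_one x⟩, ?_⟩
    rintro _ ⟨d, hd, n, hn, rfl⟩
    obtain ⟨v, hv, rfl⟩ := hDsub hd
    have : v * n ∈ V * V := Set.mul_mem_mul hv (hNV hn)
    simpa [mul_assoc] using hVV this
  · -- Pytkeev
    intro x U hU hxU A hA
    obtain ⟨V, hVo, hV1, hVV⟩ := exists_open_nhds_one_mul_subset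
      ((hU.preimage (continuous_mul_left x)).mem_nhds (by simpa using hxU))
    have hAcc : AccumulatesAt (x⁻¹ • A) (1 : G) := by
      intro W hW
      have hxW : x • W ∈ 𝓝 x := by
        have := smul_mem_nhds_smul x hW
        simpa using this
      have hinf := hA (x • W) hxW
      have : (x⁻¹ • (x • W ∩ A)).Infinite :=
        hinf.image (MulAction.injective (x⁻¹ : G)).injOn
      have heq : x⁻¹ • (x • W ∩ A) = W ∩ x⁻¹ • A := by
        rw [Set.smul_set_inter, smul_smul, inv_mul_cancel, one_smul]
      rwa [heq] at this
    obtain ⟨N, hN, hNV, hNinf⟩ := hPpyt V hVo hV1 (x⁻¹ • A) hAcc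
    obtain ⟨D, hD, hxD, hDsub⟩ := h𝒩 x (x • V) (hVo.smul x) ⟨1, hV1, mul_one x⟩
    refine ⟨D * N, Set.mem_image2_of_mem hD hN, ?_, ?_⟩
    · rintro _ ⟨d, hd, n, hn, rfl⟩
      obtain ⟨v, hv, rfl⟩ := hDsub hd
      have : v * n ∈ V * V := Set.mul_mem_mul hv (hNV hn)
      simpa [mul_assoc] using hVV this
    · have hsub : x • (N ∩ x⁻¹ • A) ⊆ (D * N) ∩ A := by
        rintro _ ⟨n, ⟨hn, ha⟩, rfl⟩
        refine ⟨Set.mul_mem_mul hxD hn, ?_⟩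
        obtain ⟨a, haA, rfl⟩ := ha
        simpa using haA
      exact ((hNinf.image (MulAction.injective (x : G)).injOn)).mono hsub
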